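/- Let R be a standard Young tableau of skew shape λ/μ with n cells, and let 1 ≤ k′ ≤ k ≤ n. If the set {n−1,…,n−k+1} satisfies properties (i) and (ii) in R, then the set {n−1,…,n−k′+1} also satisfies properties (i) and (ii) in R. In other words, properties (i) and (ii) become more restrictive as k increases, so the values of k for which they hold form an initial segment. -/
import Mathlib


/-!
Common definitions for skew shapes, standard Young tableaux, the southeast
boundary, southeast min-unimodal sets, the southeast rotation `Rot_SE`,
balance, balance points, and the map `Θ`, following the paper.

Cells are pairs `(i, j) : ℕ × ℕ` (row `i` counted from the top, column `j`
counted from the left).  South means larger row index, east means larger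
column index.
-/

open scoped Classical

namespace SkewSE

abbrev Cell : Type := ℕ × ℕ

/-- `a` is weakly southwest of `b`: weakly south (row ≥) and weakly west (col ≤). -/
def weakSW (a b : Cell) : Prop := b.1 ≤ a.1 ∧ a.2 ≤ b.2

/-- `a` is strictly southwest of `b`: strictly south and strictly west. -/
def strictSW (a b : Cell) : Prop := b.1 < a.1 ∧ a.2 < b.2

/-- The (strict) southwest-to-northeast order on cells:
`a` comes before `b` if `a` is weakly southwest of `b` and `a ≠ b`. -/
def swLT (a b : Cell) : Prop := weakSW a b ∧ a ≠ b

/-- Two cells are adjacent if they share an edge. -/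
def adjacent (a b : Cell) : Prop :=
  (a.1 = b.1 ∧ (a.2 = b.2 + 1 ∨ b.2 = a.2 + 1)) ∨
  (a.2 = b.2 ∧ (a.1 = b.1 + 1 ∨ b.1 = a.1 + 1))

/-- `a` and `b` lie in the same connected component of the set of cells `P`
(with respect to edge-adjacency). -/
def sameComp (P : Finset Cell) (a b : Cell) : Prop :=
  a ∈ P ∧ b ∈ P ∧ Relation.ReflTransGen (fun x y => x ∈ P ∧ y ∈ P ∧ adjacent x y) a b

/-- The cells of the skew shape `λ/μ`. -/
def skewCells (lam mu : YoungDiagram) : Finset Cell := lam.cells \ mu.cells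

/-- `n = |λ/μ|`, the number of cells. -/
def numCells (lam mu : YoungDiagram) : ℕ := (skewCells lam mu).card

/-- A set of cells is a skew shape if it is the difference of two Young diagrams. -/
def IsSkewShape (P : Finset Cell) : Prop :=
  ∃ lam' mu' : YoungDiagram, mu' ≤ lam' ∧ P = lam'.cells \ mu'.cells

/-- A standard Young tableau of skew shape `λ/μ`: a bijective filling of the
cells by `{1,…,n}`, strictly increasing west-to-east along rows and
north-to-south down columns.  (Entries are `0` off the shape.) -/
structure SYT (lam mu : YoungDiagram) where
  entry : Cell → ℕ
  bijOn : Set.BijOn entry (skewCells lam mu : Set Cell)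
    ((Finset.Icc 1 (numCells lam mu) : Finset ℕ) : Set ℕ)
  row_lt : ∀ i j : ℕ, (i, j) ∈ skewCells lam mu → (i, j + 1) ∈ skewCells lam mu →
    entry (i, j) < entry (i, j + 1)
  col_lt : ∀ i j : ℕ, (i, j) ∈ skewCells lam mu → (i + 1, j) ∈ skewCells lam mu →
    entry (i, j) < entry (i + 1, j)
  zero_outside : ∀ c : Cell, c ∉ skewCells lam mu → entry c = 0

variable {lam mu : YoungDiagram}

/-- `pos T x` is the cell of `T` containing the entry `x`. -/
noncomputable def pos (T : SYT lam mu) (x : ℕ) : Cell :=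
  if h : ∃ c ∈ skewCells lam mu, T.entry c = x then h.choose else (0, 0)

/-- The southeast boundary of `λ/μ`: cells `(i,j)` with `(i+1, j+1) ∉ λ/μ`. -/
def SEboundary (lam mu : YoungDiagram) : Finset Cell :=
  (skewCells lam mu).filter (fun c => (c.1 + 1, c.2 + 1) ∉ skewCells lam mu)

/-- `S` is southeast min-unimodal in `T`: the cells `pos_T(S)` lie on the
southeast boundary, in a single connected component of `λ/μ`, are totally
ordered southwest-to-northeast, and the entries, read in the
southwest-to-northeast order of their cells, strictly decrease until
reaching `min S` and then strictly increase. -/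
def MinUnimodalSE (T : SYT lam mu) (S : Finset ℕ) : Prop :=
  ∃ hne : S.Nonempty,
    S ⊆ Finset.Icc 1 (numCells lam mu) ∧
    (∀ x ∈ S, pos T x ∈ SEboundary lam mu) ∧
    (∀ x ∈ S, ∀ y ∈ S, sameComp (skewCells lam mu) (pos T x) (pos T y)) ∧
    (∀ x ∈ S, ∀ y ∈ S, weakSW (pos T x) (pos T y) ∨ weakSW (pos T y) (pos T x)) ∧
    (∀ x ∈ S, ∀ y ∈ S, swLT (pos T x) (pos T y) →
      (weakSW (pos T y) (pos T (S.min' hne)) → y < x) ∧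
      (weakSW (pos T (S.min' hne)) (pos T x) → x < y))

/-- `k` such that `Rc_SE(T) = {n-k+1, …, n}`: the maximal `k ≥ 1` for which
this set is southeast min-unimodal in `T`. -/
noncomputable def kSE (T : SYT lam mu) : ℕ :=
  sSup {k : ℕ | 1 ≤ k ∧ k ≤ numCells lam mu ∧
    MinUnimodalSE T (Finset.Icc (numCells lam mu - k + 1) (numCells lam mu))}

/-- `Rc_SE(T) = {n-k+1, …, n}` with `k` maximal as above. -/
noncomputable def RcSE (T : SYT lam mu) : Finset ℕ :=
  Finset.Icc (numCells lam mu - kSE T + 1) (numCells lam mu)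

/-- `Rp_SE(T) = pos_T(Rc_SE(T))`. -/
noncomputable def RpSE (T : SYT lam mu) : Finset Cell := (RcSE T).image (pos T)

/-- `Y = pos_T(min Rc_SE(T))`. -/
noncomputable def Ycell (T : SYT lam mu) : Cell :=
  pos T (numCells lam mu - kSE T + 1)

/-- The position of the largest entry `n`. -/
noncomputable def posN (T : SYT lam mu) : Cell := pos T (numCells lam mu)

/-- `pos_T(n)` is the southwesternmost cell of `Rp_SE(T)`. -/
def SWmostAtN (T : SYT lam mu) : Prop := ∀ c ∈ RpSE T, weakSW (posN T) c

/-- `pos_T(n)` is the northeasternmost cell of `Rp_SE(T)`. -/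
def NEmostAtN (T : SYT lam mu) : Prop := ∀ c ∈ RpSE T, weakSW c (posN T)

/-- The southernmost cell of `P` in the column of `Y`. -/
noncomputable def southEnd (P : Finset Cell) (Y : Cell) : Cell :=
  if h : ∃ c ∈ P, c.2 = Y.2 ∧ ∀ d ∈ P, d.2 = Y.2 → d.1 ≤ c.1 then h.choose else Y

/-- The easternmost cell of `P` in the row of `Y`. -/
noncomputable def eastEnd (P : Finset Cell) (Y : Cell) : Cell :=
  if h : ∃ c ∈ P, c.1 = Y.1 ∧ ∀ d ∈ P, d.1 = Y.1 → d.2 ≤ c.2 then h.choose else Y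

/-- The southeast rotation endpoint `X` of `T`. -/
noncomputable def Xend (T : SYT lam mu) : Cell :=
  if SWmostAtN T then
    if ∃ c ∈ RpSE T, c.2 = (Ycell T).2 ∧ (Ycell T).1 < c.1 then
      southEnd (RpSE T) (Ycell T)
    else eastEnd (RpSE T) (Ycell T)
  else
    if ∃ c ∈ RpSE T, c.1 = (Ycell T).1 ∧ (Ycell T).2 < c.2 then
      eastEnd (RpSE T) (Ycell T)
    else southEnd (RpSE T) (Ycell T)

/-- The cells `Z_1, …, Z_j` of `Rp_SE(T)` lying weakly between `pos_T(n)`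
and `X` in the southwest-to-northeast order. -/
noncomputable def chainSE (T : SYT lam mu) : Finset Cell :=
  (RpSE T).filter (fun c =>
    (weakSW (posN T) c ∧ weakSW c (Xend T)) ∨ (weakSW (Xend T) c ∧ weakSW c (posN T)))

/-- The next cell of `P` after `c` in southwest-to-northeast order. -/
noncomputable def nextNE (P : Finset Cell) (c : Cell) : Cell :=
  if h : ∃ d ∈ P, swLT c d ∧ ∀ e ∈ P, swLT c e → weakSW d e then h.choose else c

/-- The next cell of `P` before `c` in southwest-to-northeast order. -/
noncomputable def nextSW (P : Finset Cell) (c : Cell) : Cell :=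
  if h : ∃ d ∈ P, swLT d c ∧ ∀ e ∈ P, swLT e c → weakSW e d then h.choose else c

/-- The filling `Rot_SE(T)` produced by the southeast rotation:
`n` moves to `X`, and the entries of the cells of `Rp_SE(T)` weakly between
`pos_T(n)` and `X` are each shifted one position towards `pos_T(n)`;
all other entries are unchanged. -/
noncomputable def rotEntry (T : SYT lam mu) (c : Cell) : ℕ :=
  if c ∈ chainSE T then
    if c = Xend T then numCells lam mu
    else if SWmostAtN T then T.entry (nextNE (chainSE T) c)
    else T.entry (nextSW (chainSE T) c)
  else T.entry c

/-- The southeast rotation as a map `SYT(λ/μ) → SYT(λ/μ)`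
(well-defined since the rotated filling is again standard). -/
noncomputable def RotSE (T : SYT lam mu) : SYT lam mu :=
  if h : ∃ R : SYT lam mu, R.entry = rotEntry T then h.choose else T

/-- The descent set `Des(T) = {i : pos_T(i+1) is strictly south of pos_T(i)}`. -/
noncomputable def Des (T : SYT lam mu) : Finset ℕ :=
  (Finset.Icc 1 (numCells lam mu - 1)).filter
    (fun i => (pos T i).1 < (pos T (i + 1)).1)

/-- `S` is balanced with respect to `W` in `U`: the entries in the cells of
`pos_U(S)` weakly northeast of `W` increase from southwest to northeast, and
the entries in the cells of `pos_U(S)` weakly southwest of `W` increase from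
northeast to southwest. -/
def Balanced (U : SYT lam mu) (S : Finset ℕ) (W : Cell) : Prop :=
  (∀ x ∈ S, ∀ y ∈ S, weakSW W (pos U x) → weakSW W (pos U y) →
    swLT (pos U x) (pos U y) → x < y) ∧
  (∀ x ∈ S, ∀ y ∈ S, weakSW (pos U x) W → weakSW (pos U y) W →
    swLT (pos U y) (pos U x) → x < y)

/-- `a` and `b` are distinct and consecutive in the southwest-to-northeast
order on the set of cells `Q`. -/
def consecutiveIn (Q : Finset Cell) (a b : Cell) : Prop :=
  a ∈ Q ∧ b ∈ Q ∧ (swLT a b ∨ swLT b a) ∧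
  ∀ c ∈ Q, ¬ (swLT a c ∧ swLT c b) ∧ ¬ (swLT b c ∧ swLT c a)

/-- The northern balance point of a southeast exterior corner `Z`: the cell
of the southeast boundary weakly due north of `Z` farthest from `Z`. -/
noncomputable def northBP (lam mu : YoungDiagram) (Z : Cell) : Cell :=
  if h : ∃ c ∈ SEboundary lam mu, c.2 = Z.2 ∧ c.1 ≤ Z.1 ∧
      ∀ d ∈ SEboundary lam mu, d.2 = Z.2 → d.1 ≤ Z.1 → c.1 ≤ d.1
  then h.choose else Z

/-- The western balance point of a southeast exterior corner `Z`: the cell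
of the southeast boundary weakly due west of `Z` farthest from `Z`. -/
noncomputable def westBP (lam mu : YoungDiagram) (Z : Cell) : Cell :=
  if h : ∃ c ∈ SEboundary lam mu, c.1 = Z.1 ∧ c.2 ≤ Z.2 ∧
      ∀ d ∈ SEboundary lam mu, d.1 = Z.1 → d.2 ≤ Z.2 → c.2 ≤ d.2
  then h.choose else Z

/-- Property (i) for `S = {n-1, …, n-k+1}` in `R`:
`S` is southeast min-unimodal in `R` and lies in the same connected
component of `λ/μ` as `pos_R(n)` (vacuous when `S` is empty, i.e. `k = 1`). -/
def PropI (R : SYT lam mu) (k : ℕ) : Prop :=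
  (Finset.Icc (numCells lam mu - k + 1) (numCells lam mu - 1)).Nonempty →
    MinUnimodalSE R (Finset.Icc (numCells lam mu - k + 1) (numCells lam mu - 1)) ∧
    ∀ x ∈ Finset.Icc (numCells lam mu - k + 1) (numCells lam mu - 1),
      sameComp (skewCells lam mu) (pos R x) (pos R (numCells lam mu))

/-- `pos_R(S)` contains the northern neighbor of `pos_R(n)`,
for `S = {n-1, …, n-k+1}`. -/
def hasNorthNbr (R : SYT lam mu) (k : ℕ) : Prop :=
  ∃ x ∈ Finset.Icc (numCells lam mu - k + 1) (numCells lam mu - 1),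
    (pos R x).2 = (pos R (numCells lam mu)).2 ∧
    (pos R x).1 + 1 = (pos R (numCells lam mu)).1

/-- `pos_R(S)` contains the western neighbor of `pos_R(n)`,
for `S = {n-1, …, n-k+1}`. -/
def hasWestNbr (R : SYT lam mu) (k : ℕ) : Prop :=
  ∃ x ∈ Finset.Icc (numCells lam mu - k + 1) (numCells lam mu - 1),
    (pos R x).1 = (pos R (numCells lam mu)).1 ∧
    (pos R x).2 + 1 = (pos R (numCells lam mu)).2

/-- Property (ii) for `S = {n-1, …, n-k+1}` in `R`. -/
def PropII (R : SYT lam mu) (k : ℕ) : Prop :=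
  ¬ (hasNorthNbr R k ∧ hasWestNbr R k) ∧
  (hasNorthNbr R k →
    Balanced R (Finset.Icc (numCells lam mu - k + 1) (numCells lam mu - 1))
      (northBP lam mu (pos R (numCells lam mu)))) ∧
  (hasWestNbr R k →
    Balanced R (Finset.Icc (numCells lam mu - k + 1) (numCells lam mu - 1))
      (westBP lam mu (pos R (numCells lam mu)))) ∧
  (¬ hasNorthNbr R k → ¬ hasWestNbr R k →
    Balanced R (Finset.Icc (numCells lam mu - k + 1) (numCells lam mu - 1))
      (northBP lam mu (pos R (numCells lam mu))) ∧
    Balanced R (Finset.Icc (numCells lam mu - k + 1) (numCells lam mu - 1))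
      (westBP lam mu (pos R (numCells lam mu))))

/-- The maximal `k` such that `S = {n-1, …, n-k+1}` satisfies properties
(i) and (ii) in `R`; used to define `Θ`. -/
noncomputable def kTheta (R : SYT lam mu) : ℕ :=
  sSup {k : ℕ | 1 ≤ k ∧ k ≤ numCells lam mu ∧ PropI R k ∧ PropII R k}

/-- The southwesternmost cell of `P`. -/
noncomputable def SWend (P : Finset Cell) : Cell :=
  if h : ∃ c ∈ P, ∀ d ∈ P, weakSW c d then h.choose else (0, 0)

/-- The northeasternmost cell of `P`. -/
noncomputable def NEend (P : Finset Cell) : Cell :=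
  if h : ∃ c ∈ P, ∀ d ∈ P, weakSW d c then h.choose else (0, 0)

/-- `P = pos_R({n, …, n-k+1})` for `k = kTheta R`. -/
noncomputable def PTheta (R : SYT lam mu) : Finset Cell :=
  (Finset.Icc (numCells lam mu - kTheta R + 1) (numCells lam mu)).image (pos R)

/-- `pos_R(n - k + 1)` for `k = kTheta R`. -/
noncomputable def posMTheta (R : SYT lam mu) : Cell :=
  pos R (numCells lam mu - kTheta R + 1)

/-- `Θ` moves `n` to the southwestern end exactly when: `pos_R(n)` and
`pos_R(n-k+1)` lie in different connected components of `P` and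
`pos_R(n-k+1)` is on the southwestern side, or they lie in the same
connected component and `pos_R(n-k+1)` is on the northeastern side. -/
def destIsSW (R : SYT lam mu) : Prop :=
  weakSW (posMTheta R) (posN R) ↔ ¬ sameComp (PTheta R) (posN R) (posMTheta R)

/-- The destination cell for `n` under `Θ`. -/
noncomputable def destTheta (R : SYT lam mu) : Cell :=
  if destIsSW R then SWend (PTheta R) else NEend (PTheta R)

/-- The cells of `P` weakly between the destination cell and `pos_R(n)`. -/
noncomputable def chainTheta (R : SYT lam mu) : Finset Cell :=
  (PTheta R).filter (fun c =>
    (weakSW (destTheta R) c ∧ weakSW c (posN R)) ∨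
    (weakSW (posN R) c ∧ weakSW c (destTheta R)))

/-- The filling `Θ(R)`: `n` moves from `pos_R(n)` to the destination cell,
and each entry occupying a cell of `P` strictly between them is shifted one
position in `P` closer to `pos_R(n)`; all other entries are unchanged. -/
noncomputable def thetaEntry (R : SYT lam mu) (c : Cell) : ℕ :=
  if c ∈ chainTheta R then
    if c = destTheta R then numCells lam mu
    else if destIsSW R then R.entry (nextSW (chainTheta R) c)
    else R.entry (nextNE (chainTheta R) c)
  else R.entry c

/-- The map `Θ` as a map on standard Young tableaux. -/
noncomputable def Theta (R : SYT lam mu) : SYT lam mu :=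
  if h : ∃ U : SYT lam mu, U.entry = thetaEntry R then h.choose else R

/-- A single-column rectangle with northern endpoint `Y` and southern endpoint `X`. -/
def IsColSeg (P : Finset Cell) (Y X : Cell) : Prop :=
  Y.2 = X.2 ∧ Y.1 ≤ X.1 ∧ P = (Finset.Icc Y.1 X.1).image (fun i => (i, Y.2))

/-- A single-row rectangle with western endpoint `Y` and eastern endpoint `X`. -/
def IsRowSeg (P : Finset Cell) (Y X : Cell) : Prop :=
  Y.1 = X.1 ∧ Y.2 ≤ X.2 ∧ P = (Finset.Icc Y.2 X.2).image (fun j => (Y.1, j))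

/-- A hook with northwestern corner `Y`, southern endpoint `A`, and eastern
endpoint `B` (both arms of positive length). -/
def IsHook (P : Finset Cell) (Y A B : Cell) : Prop :=
  A.2 = Y.2 ∧ Y.1 < A.1 ∧ B.1 = Y.1 ∧ Y.2 < B.2 ∧
  P = (Finset.Icc Y.1 A.1).image (fun i => (i, Y.2)) ∪
      (Finset.Icc Y.2 B.2).image (fun j => (Y.1, j))

end SkewSE

namespace SkewSE

variable {lam mu : YoungDiagram}

lemma weakSW_trans {a b c : Cell} (h1 : weakSW a b) (h2 : weakSW b c) : weakSW a c :=
  ⟨le_trans h2.1 h1.1, le_trans h1.2 h2.2⟩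

lemma pos_spec (R : SYT lam mu) {x : ℕ} (hx : x ∈ Finset.Icc 1 (numCells lam mu)) :
    pos R x ∈ skewCells lam mu ∧ R.entry (pos R x) = x := by
  have h : ∃ c ∈ skewCells lam mu, R.entry c = x := by
    obtain ⟨c, hc, hcx⟩ := R.bijOn.surjOn (by exact_mod_cast hx)
    exact ⟨c, by exact_mod_cast hc, hcx⟩
  rw [pos, dif_pos h]
  exact h.choose_spec

lemma pos_inj (R : SYT lam mu) {x y : ℕ} (hx : x ∈ Finset.Icc 1 (numCells lam mu))
    (hy : y ∈ Finset.Icc 1 (numCells lam mu)) (h : pos R x = pos R y) : x = y := by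
  calc x = R.entry (pos R x) := (pos_spec R hx).2.symm
    _ = R.entry (pos R y) := by rw [h]
    _ = y := (pos_spec R hy).2

lemma mem_row_interval {i j1 j j2 : ℕ} (h1 : (i, j1) ∈ skewCells lam mu)
    (h2 : (i, j2) ∈ skewCells lam mu) (hj1 : j1 ≤ j) (hj2 : j ≤ j2) :
    (i, j) ∈ skewCells lam mu := by
  simp only [skewCells, Finset.mem_sdiff, YoungDiagram.mem_cells] at *
  exact ⟨lam.up_left_mem le_rfl hj2 h2.1, fun hm => h1.2 (mu.up_left_mem le_rfl hj1 hm)⟩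

lemma mem_col_interval {i1 i i2 j : ℕ} (h1 : (i1, j) ∈ skewCells lam mu)
    (h2 : (i2, j) ∈ skewCells lam mu) (hi1 : i1 ≤ i) (hi2 : i ≤ i2) :
    (i, j) ∈ skewCells lam mu := by
  simp only [skewCells, Finset.mem_sdiff, YoungDiagram.mem_cells] at *
  exact ⟨lam.up_left_mem hi2 le_rfl h2.1, fun hm => h1.2 (mu.up_left_mem hi1 le_rfl hm)⟩

lemma entry_row_le (R : SYT lam mu) {i j1 j2 : ℕ} (hj : j1 ≤ j2)
    (h1 : (i, j1) ∈ skewCells lam mu) (h2 : (i, j2) ∈ skewCells lam mu) :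
    R.entry (i, j1) ≤ R.entry (i, j2) := by
  obtain ⟨d, rfl⟩ := Nat.exists_eq_add_of_le hj
  clear hj
  revert h2
  induction d with
  | zero => intro h2; exact le_rfl
  | succ d ih =>
    intro h2
    have hmem : (i, j1 + d) ∈ skewCells lam mu :=
      mem_row_interval h1 h2 (Nat.le_add_right _ _) (by omega)
    exact le_trans (ih hmem) (le_of_lt (R.row_lt i (j1 + d) hmem h2))

lemma entry_col_le (R : SYT lam mu) {i1 i2 j : ℕ} (hi : i1 ≤ i2)
    (h1 : (i1, j) ∈ skewCells lam mu) (h2 : (i2, j) ∈ skewCells lam mu) :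
    R.entry (i1, j) ≤ R.entry (i2, j) := by
  obtain ⟨d, rfl⟩ := Nat.exists_eq_add_of_le hi
  clear hi
  revert h2
  induction d with
  | zero => intro h2; exact le_rfl
  | succ d ih =>
    intro h2
    have hmem : (i1 + d, j) ∈ skewCells lam mu :=
      mem_col_interval h1 h2 (Nat.le_add_right _ _) (by omega)
    exact le_trans (ih hmem) (le_of_lt (R.col_lt (i1 + d) j hmem h2))

lemma min'_Icc {a b : ℕ} (h : (Finset.Icc a b).Nonempty) : (Finset.Icc a b).min' h = a := by
  have h1 := Finset.min'_mem _ h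
  rw [Finset.mem_Icc] at h1
  have hab : a ≤ b := by
    obtain ⟨x, hx⟩ := h
    rw [Finset.mem_Icc] at hx
    omega
  exact le_antisymm (Finset.min'_le _ _ (Finset.mem_Icc.mpr ⟨le_rfl, hab⟩)) h1.1

lemma minUnimodal_subset (R : SYT lam mu) {S S' : Finset ℕ} (hss : S' ⊆ S)
    (hne' : S'.Nonempty) (h : MinUnimodalSE R S) : MinUnimodalSE R S' := by
  obtain ⟨hne, hIcc, hbd, hcomp, htot, huni⟩ := h
  refine ⟨hne', hss.trans hIcc, fun x hx => hbd x (hss hx),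
    fun x hx y hy => hcomp x (hss hx) y (hss hy),
    fun x hx y hy => htot x (hss hx) y (hss hy), ?_⟩
  intro x hx y hy hxy
  have hm'S' : S'.min' hne' ∈ S' := S'.min'_mem hne'
  have hm'S : S'.min' hne' ∈ S := hss hm'S'
  have hmS : S.min' hne ∈ S := S.min'_mem hne
  have hxyne : x ≠ y := fun h' => hxy.2 (by rw [h'])
  constructor
  · intro hy_m'
    rcases htot (S'.min' hne') hm'S (S.min' hne) hmS with hA | hB
    · exact (huni x (hss hx) y (hss hy) hxy).1 (weakSW_trans hy_m' hA)
    · rcases htot y (hss hy) (S.min' hne) hmS with hB1 | hB2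
      · exact (huni x (hss hx) y (hss hy) hxy).1 hB1
      · by_cases hpy : pos R y = pos R (S'.min' hne')
        · have hym : y = S'.min' hne' := pos_inj R (hIcc (hss hy)) (hIcc hm'S) hpy
          have hxm := S'.min'_le x hx
          omega
        · by_cases hpym : pos R y = pos R (S.min' hne)
          · have hym : y = S.min' hne := pos_inj R (hIcc (hss hy)) (hIcc hmS) hpym
            have hxm := S.min'_le x (hss hx)
            omega
          · have h5 := (huni y (hss hy) (S'.min' hne') hm'S ⟨hy_m', hpy⟩).2 hB2
            have := S'.min'_le y hy
            omega
  · intro hm'_x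
    rcases htot (S.min' hne) hmS (S'.min' hne') hm'S with hA | hB
    · exact (huni x (hss hx) y (hss hy) hxy).2 (weakSW_trans hA hm'_x)
    · rcases htot (S.min' hne) hmS x (hss hx) with hC | hD
      · exact (huni x (hss hx) y (hss hy) hxy).2 hC
      · by_cases hpx : pos R x = pos R (S'.min' hne')
        · have hxm : x = S'.min' hne' := pos_inj R (hIcc (hss hx)) (hIcc hm'S) hpx
          have hym := S'.min'_le y hy
          omega
        · by_cases hpxm : pos R x = pos R (S.min' hne)
          · have hxm : x = S.min' hne := pos_inj R (hIcc (hss hx)) (hIcc hmS) hpxm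
            have hym := S.min'_le y (hss hy)
            omega
          · have h5 := (huni (S'.min' hne') hm'S x (hss hx)
              ⟨hm'_x, fun e => hpx e.symm⟩).1 hD
            have := S'.min'_le x hx
            omega

lemma balanced_subset (R : SYT lam mu) {S S' : Finset ℕ} (hss : S' ⊆ S) {W : Cell}
    (h : Balanced R S W) : Balanced R S' W :=
  ⟨fun x hx y hy => h.1 x (hss hx) y (hss hy), fun x hx y hy => h.2 x (hss hx) y (hss hy)⟩

lemma northBP_spec (Z : Cell) : (northBP lam mu Z).2 = Z.2 ∧ (northBP lam mu Z).1 ≤ Z.1 := by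
  rw [northBP]
  split_ifs with h
  · exact ⟨h.choose_spec.2.1, h.choose_spec.2.2.1⟩
  · exact ⟨rfl, le_rfl⟩

lemma westBP_spec (Z : Cell) : (westBP lam mu Z).1 = Z.1 ∧ (westBP lam mu Z).2 ≤ Z.2 := by
  rw [westBP]
  split_ifs with h
  · exact ⟨h.choose_spec.2.1, h.choose_spec.2.2.1⟩
  · exact ⟨rfl, le_rfl⟩

lemma hasNorthNbr_mono (R : SYT lam mu) {k k' : ℕ} (h2 : k' ≤ k) :
    hasNorthNbr R k' → hasNorthNbr R k := by
  rintro ⟨x, hx, h⟩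
  exact ⟨x, Finset.Icc_subset_Icc (by omega) le_rfl hx, h⟩

lemma hasWestNbr_mono (R : SYT lam mu) {k k' : ℕ} (h2 : k' ≤ k) :
    hasWestNbr R k' → hasWestNbr R k := by
  rintro ⟨x, hx, h⟩
  exact ⟨x, Finset.Icc_subset_Icc (by omega) le_rfl hx, h⟩

lemma balanced_west_of_north (R : SYT lam mu) {k k' : ℕ} (h1 : 1 ≤ k') (h2 : k' ≤ k)
    (h3 : k ≤ numCells lam mu)
    (hMU : MinUnimodalSE R (Finset.Icc (numCells lam mu - k + 1) (numCells lam mu - 1)))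
    (hN : hasNorthNbr R k) (hNk' : ¬ hasNorthNbr R k') (hWk' : ¬ hasWestNbr R k')
    (hBal : Balanced R (Finset.Icc (numCells lam mu - k + 1) (numCells lam mu - 1))
      (northBP lam mu (pos R (numCells lam mu)))) :
    Balanced R (Finset.Icc (numCells lam mu - k' + 1) (numCells lam mu - 1))
      (westBP lam mu (pos R (numCells lam mu))) := by
  set n := numCells lam mu with hn
  have hn1 : 1 ≤ n := le_trans h1 (le_trans h2 h3)
  have hss : Finset.Icc (n - k' + 1) (n - 1) ⊆ Finset.Icc (n - k + 1) (n - 1) :=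
    Finset.Icc_subset_Icc (by omega) le_rfl
  have hnIcc : n ∈ Finset.Icc 1 n := Finset.mem_Icc.mpr ⟨hn1, le_rfl⟩
  have hZn := pos_spec R hnIcc
  obtain ⟨e, heS, hec, her⟩ := hN
  rw [← hn] at hec her heS
  have heIcc := Finset.mem_Icc.mp heS
  have he' : e ≤ n - k' := by
    by_contra hcon
    exact hNk' ⟨e, Finset.mem_Icc.mpr ⟨by omega, heIcc.2⟩, hec, her⟩
  obtain ⟨hne, hIcc, hbd, hcomp, htot, huni⟩ := hMU
  have hmeq : (Finset.Icc (n - k + 1) (n - 1)).min' hne = n - k + 1 := min'_Icc hne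
  have hmS : n - k + 1 ∈ Finset.Icc (n - k + 1) (n - 1) :=
    Finset.mem_Icc.mpr ⟨le_rfl, by omega⟩
  have hW := westBP_spec (lam := lam) (mu := mu) (pos R n)
  have hZ := northBP_spec (lam := lam) (mu := mu) (pos R n)
  constructor
  · -- northeast side of westBP
    intro x hx y hy hWx hWy hxy
    have hxS := hss hx
    have hyS := hss hy
    have hx1 : x ∈ Finset.Icc 1 n := hIcc hxS
    have hxIcc := Finset.mem_Icc.mp hx
    rcases htot (n - k + 1) hmS x hxS with hA | hB
    · exact (huni x hxS y hyS hxy).2 (by rw [hmeq]; exact hA)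
    · exfalso
      by_cases hpe : pos R x = pos R e
      · have : x = e := pos_inj R hx1 (hIcc heS) hpe
        omega
      · rcases htot e heS x hxS with hC | hD
        · have := (huni e heS x hxS ⟨hC, fun h => hpe h.symm⟩).1 (by rw [hmeq]; exact hB)
          omega
        · -- geometry: pos x weakly SW of pos e = (r-1, c)
          have hd1 : (pos R e).1 ≤ (pos R x).1 := hD.1
          have hd2 : (pos R x).2 ≤ (pos R n).2 := by rw [← hec]; exact hD.2
          have hx_r : (pos R x).1 ≤ (pos R n).1 := le_trans hWx.1 (le_of_eq hW.1)
          have hxmem := (pos_spec R hx1).1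
          have hxentry := (pos_spec R hx1).2
          have hrows : (pos R x).1 = (pos R n).1 ∨ (pos R x).1 + 1 = (pos R n).1 := by
            omega
          rcases hrows with hrow | hrow
          · -- same row as pos n
            by_cases hjc : (pos R x).2 = (pos R n).2
            · have hpn : pos R x = pos R n := Prod.ext hrow hjc
              have : x = n := pos_inj R hx1 hnIcc hpn
              omega
            · have hjlt : (pos R x).2 < (pos R n).2 := lt_of_le_of_ne hd2 hjc
              obtain ⟨c1, hc1⟩ : ∃ c1, (pos R n).2 = c1 + 1 := ⟨(pos R n).2 - 1, by omega⟩
              have hxcell : ((pos R n).1, (pos R x).2) ∈ skewCells lam mu := by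
                rw [← hrow]; exact hxmem
              have hncell : ((pos R n).1, (pos R n).2) ∈ skewCells lam mu := hZn.1
              have hwcell : ((pos R n).1, c1) ∈ skewCells lam mu :=
                mem_row_interval hxcell hncell (by omega) (by omega)
              have hle1 : R.entry ((pos R n).1, (pos R x).2) ≤ R.entry ((pos R n).1, c1) :=
                entry_row_le R (by omega) hxcell hwcell
              have hlt2 : R.entry ((pos R n).1, c1) < R.entry ((pos R n).1, (pos R n).2) := by
                have := R.row_lt (pos R n).1 c1 hwcell (by rw [← hc1]; exact hncell)
                rw [hc1]; exact this
              have hxval : R.entry ((pos R n).1, (pos R x).2) = x := by rw [← hrow]; exact hxentry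
              have hnval : R.entry ((pos R n).1, (pos R n).2) = n := hZn.2
              set e' := R.entry ((pos R n).1, c1) with he'def
              have he'Icc : e' ∈ Finset.Icc 1 n := Finset.mem_Icc.mpr ⟨by omega, by omega⟩
              have hpe' : pos R e' = ((pos R n).1, c1) := by
                have hps := pos_spec R he'Icc
                exact R.bijOn.injOn hps.1 hwcell (by rw [hps.2])
              exact hWk' ⟨e', Finset.mem_Icc.mpr ⟨by omega, by omega⟩,
                by rw [hpe'], by rw [hpe']; exact hc1.symm⟩
          · -- row above pos n: pos x has row (pos n).1 - 1 = (pos e).1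
            have hjlt : (pos R x).2 < (pos R n).2 := by
              rcases lt_or_eq_of_le hd2 with h | h
              · exact h
              · exfalso
                exact hpe (Prod.ext (by omega) (by rw [h, ← hec]))
            have hbdx := hbd x hxS
            have hout : ((pos R x).1 + 1, (pos R x).2 + 1) ∉ skewCells lam mu :=
              (Finset.mem_filter.mp hbdx).2
            apply hout
            have hpe_cell : ((pos R x).1, (pos R n).2) ∈ skewCells lam mu := by
              have h0 := (pos_spec R (hIcc heS)).1
              have : pos R e = ((pos R x).1, (pos R n).2) := Prod.ext (by omega) hec
              rwa [this] at h0
            have hxcell : ((pos R x).1, (pos R x).2) ∈ skewCells lam mu := hxmem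
            have hmid : ((pos R x).1, (pos R x).2 + 1) ∈ skewCells lam mu :=
              mem_row_interval hxcell hpe_cell (by omega) (by omega)
            have hncell : ((pos R n).1, (pos R n).2) ∈ skewCells lam mu := hZn.1
            simp only [skewCells, Finset.mem_sdiff, YoungDiagram.mem_cells] at hncell hmid ⊢
            constructor
            · exact lam.up_left_mem (by omega) (by omega) hncell.1
            · intro hmu
              exact hmid.2 (mu.up_left_mem (by omega) le_rfl hmu)
  · -- southwest side of westBP: reduce to northBP balance
    intro x hx y hy hxW hyW hyx
    have hxS := hss hx
    have hyS := hss hy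
    obtain ⟨hW1, hW2⟩ := hW
    obtain ⟨hZ1, hZ2⟩ := hZ
    obtain ⟨hxW1, hxW2⟩ := hxW
    obtain ⟨hyW1, hyW2⟩ := hyW
    exact hBal.2 x hxS y hyS ⟨by omega, by omega⟩ ⟨by omega, by omega⟩ hyx

lemma balanced_north_of_west (R : SYT lam mu) {k k' : ℕ} (h1 : 1 ≤ k') (h2 : k' ≤ k)
    (h3 : k ≤ numCells lam mu)
    (hMU : MinUnimodalSE R (Finset.Icc (numCells lam mu - k + 1) (numCells lam mu - 1)))
    (hN : hasWestNbr R k) (hNk' : ¬ hasNorthNbr R k') (hWk' : ¬ hasWestNbr R k')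
    (hBal : Balanced R (Finset.Icc (numCells lam mu - k + 1) (numCells lam mu - 1))
      (westBP lam mu (pos R (numCells lam mu)))) :
    Balanced R (Finset.Icc (numCells lam mu - k' + 1) (numCells lam mu - 1))
      (northBP lam mu (pos R (numCells lam mu))) := by
  set n := numCells lam mu with hn
  have hn1 : 1 ≤ n := le_trans h1 (le_trans h2 h3)
  have hss : Finset.Icc (n - k' + 1) (n - 1) ⊆ Finset.Icc (n - k + 1) (n - 1) :=
    Finset.Icc_subset_Icc (by omega) le_rfl
  have hnIcc : n ∈ Finset.Icc 1 n := Finset.mem_Icc.mpr ⟨hn1, le_rfl⟩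
  have hZn := pos_spec R hnIcc
  obtain ⟨e, heS, hec, her⟩ := hN
  rw [← hn] at hec her heS
  have heIcc := Finset.mem_Icc.mp heS
  have he' : e ≤ n - k' := by
    by_contra hcon
    exact hWk' ⟨e, Finset.mem_Icc.mpr ⟨by omega, heIcc.2⟩, hec, her⟩
  obtain ⟨hne, hIcc, hbd, hcomp, htot, huni⟩ := hMU
  have hmeq : (Finset.Icc (n - k + 1) (n - 1)).min' hne = n - k + 1 := min'_Icc hne
  have hmS : n - k + 1 ∈ Finset.Icc (n - k + 1) (n - 1) :=
    Finset.mem_Icc.mpr ⟨le_rfl, by omega⟩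
  have hW := westBP_spec (lam := lam) (mu := mu) (pos R n)
  have hZ := northBP_spec (lam := lam) (mu := mu) (pos R n)
  constructor
  · -- northeast side of northBP: reduce to westBP balance
    intro x hx y hy hZx hZy hxy
    obtain ⟨hW1, hW2⟩ := hW
    obtain ⟨hZ1, hZ2⟩ := hZ
    obtain ⟨hZx1, hZx2⟩ := hZx
    obtain ⟨hZy1, hZy2⟩ := hZy
    exact hBal.1 x (hss hx) y (hss hy) ⟨by omega, by omega⟩ ⟨by omega, by omega⟩ hxy
  · -- southwest side of northBP
    intro x hx y hy hxZ hyZ hyx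
    have hxS := hss hx
    have hyS := hss hy
    have hx1 : x ∈ Finset.Icc 1 n := hIcc hxS
    have hxIcc := Finset.mem_Icc.mp hx
    rcases htot (n - k + 1) hmS x hxS with hA | hB
    · exfalso
      by_cases hpe : pos R x = pos R e
      · have : x = e := pos_inj R hx1 (hIcc heS) hpe
        omega
      · rcases htot x hxS e heS with hC | hD
        · have := (huni x hxS e heS ⟨hC, hpe⟩).2 (by rw [hmeq]; exact hA)
          omega
        · -- geometry: pos e weakly SW of pos x, pos e = (r, c-1)
          have hd1 : (pos R x).1 ≤ (pos R e).1 := hD.1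
          have hd2 : (pos R e).2 ≤ (pos R x).2 := hD.2
          have hx_c : (pos R x).2 ≤ (pos R n).2 := le_trans hxZ.2 (le_of_eq hZ.1)
          have hxmem := (pos_spec R hx1).1
          have hxentry := (pos_spec R hx1).2
          have hx_r : (pos R x).1 ≤ (pos R n).1 := by rw [← hec]; exact hd1
          have hcols : (pos R x).2 = (pos R n).2 ∨ (pos R x).2 + 1 = (pos R n).2 := by
            omega
          rcases hcols with hcol | hcol
          · -- same column as pos n
            by_cases hic : (pos R x).1 = (pos R n).1
            · have hpn : pos R x = pos R n := Prod.ext hic hcol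
              have : x = n := pos_inj R hx1 hnIcc hpn
              omega
            · have hilt : (pos R x).1 < (pos R n).1 := lt_of_le_of_ne hx_r hic
              obtain ⟨r1, hr1⟩ : ∃ r1, (pos R n).1 = r1 + 1 := ⟨(pos R n).1 - 1, by omega⟩
              have hxcell : ((pos R x).1, (pos R n).2) ∈ skewCells lam mu := by
                rw [← hcol]; exact hxmem
              have hncell : ((pos R n).1, (pos R n).2) ∈ skewCells lam mu := hZn.1
              have hwcell : (r1, (pos R n).2) ∈ skewCells lam mu :=
                mem_col_interval hxcell hncell (by omega) (by omega)
              have hle1 : R.entry ((pos R x).1, (pos R n).2) ≤ R.entry (r1, (pos R n).2) :=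
                entry_col_le R (by omega) hxcell hwcell
              have hlt2 : R.entry (r1, (pos R n).2) < R.entry ((pos R n).1, (pos R n).2) := by
                have := R.col_lt r1 (pos R n).2 hwcell (by rw [← hr1]; exact hncell)
                rw [hr1]; exact this
              have hxval : R.entry ((pos R x).1, (pos R n).2) = x := by rw [← hcol]; exact hxentry
              have hnval : R.entry ((pos R n).1, (pos R n).2) = n := hZn.2
              set e' := R.entry (r1, (pos R n).2) with he'def
              have he'Icc : e' ∈ Finset.Icc 1 n := Finset.mem_Icc.mpr ⟨by omega, by omega⟩
              have hpe' : pos R e' = (r1, (pos R n).2) := by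
                have hps := pos_spec R he'Icc
                exact R.bijOn.injOn hps.1 hwcell (by rw [hps.2])
              exact hNk' ⟨e', Finset.mem_Icc.mpr ⟨by omega, by omega⟩,
                by rw [hpe'], by rw [hpe']; exact hr1.symm⟩
          · -- column just west of pos n
            have hilt : (pos R x).1 < (pos R n).1 := by
              rcases lt_or_eq_of_le hx_r with h | h
              · exact h
              · exfalso
                exact hpe (Prod.ext (by omega) (by omega))
            have hbdx := hbd x hxS
            have hout : ((pos R x).1 + 1, (pos R x).2 + 1) ∉ skewCells lam mu :=
              (Finset.mem_filter.mp hbdx).2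
            apply hout
            have hpe_cell : ((pos R n).1, (pos R x).2) ∈ skewCells lam mu := by
              have h0 := (pos_spec R (hIcc heS)).1
              have heq : pos R e = ((pos R n).1, (pos R x).2) := Prod.ext hec (by omega)
              rwa [heq] at h0
            have hxcell : ((pos R x).1, (pos R x).2) ∈ skewCells lam mu := hxmem
            have hmid : ((pos R x).1 + 1, (pos R x).2) ∈ skewCells lam mu :=
              mem_col_interval hxcell hpe_cell (by omega) (by omega)
            have hncell : ((pos R n).1, (pos R n).2) ∈ skewCells lam mu := hZn.1
            simp only [skewCells, Finset.mem_sdiff, YoungDiagram.mem_cells] at hncell hmid ⊢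
            constructor
            · exact lam.up_left_mem (by omega) (by omega) hncell.1
            · intro hmu
              exact hmid.2 (mu.up_left_mem le_rfl (by omega) hmu)
    · exact (huni y hyS x hxS hyx).1 (by rw [hmeq]; exact hB)

/-- Properties (i) and (ii) become more restrictive as `k`
increases: if `1 ≤ k' ≤ k ≤ n` and `{n-1, …, n-k+1}` satisfies properties
(i) and (ii) in `R`, then so does `{n-1, …, n-k'+1}`. -/
theorem props_initial_segment (lam mu : YoungDiagram) (hsub : mu ≤ lam)
    (R : SYT lam mu) (k k' : ℕ) (h1 : 1 ≤ k') (h2 : k' ≤ k)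
    (h3 : k ≤ numCells lam mu) (hI : PropI R k) (hII : PropII R k) :
    PropI R k' ∧ PropII R k' := by
  have hss : Finset.Icc (numCells lam mu - k' + 1) (numCells lam mu - 1) ⊆
      Finset.Icc (numCells lam mu - k + 1) (numCells lam mu - 1) :=
    Finset.Icc_subset_Icc (by omega) le_rfl
  constructor
  · intro hne'
    have hne := hne'.mono hss
    obtain ⟨hMU, hcomp⟩ := hI hne
    exact ⟨minUnimodal_subset R hss hne' hMU, fun x hx => hcomp x (hss hx)⟩
  · obtain ⟨hnw, hNb, hWb, hnn⟩ := hII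
    refine ⟨fun h => hnw ⟨hasNorthNbr_mono R h2 h.1, hasWestNbr_mono R h2 h.2⟩,
      fun h => balanced_subset R hss (hNb (hasNorthNbr_mono R h2 h)),
      fun h => balanced_subset R hss (hWb (hasWestNbr_mono R h2 h)), ?_⟩
    intro hN' hW'
    by_cases hNk : hasNorthNbr R k
    · have hne : (Finset.Icc (numCells lam mu - k + 1) (numCells lam mu - 1)).Nonempty := by
        obtain ⟨e, heS, -⟩ := hNk
        exact ⟨e, heS⟩
      obtain ⟨hMU, -⟩ := hI hne
      exact ⟨balanced_subset R hss (hNb hNk),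
        balanced_west_of_north R h1 h2 h3 hMU hNk hN' hW' (hNb hNk)⟩
    · by_cases hWk : hasWestNbr R k
      · have hne : (Finset.Icc (numCells lam mu - k + 1) (numCells lam mu - 1)).Nonempty := by
          obtain ⟨e, heS, -⟩ := hWk
          exact ⟨e, heS⟩
        obtain ⟨hMU, -⟩ := hI hne
        exact ⟨balanced_north_of_west R h1 h2 h3 hMU hWk hN' hW' (hWb hWk),
          balanced_subset R hss (hWb hWk)⟩
      · obtain ⟨hb1, hb2⟩ := hnn hNk hWk
        exact ⟨balanced_subset R hss hb1, balanced_subset R hss hb2⟩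

end SkewSE
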